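/- Let H_0, H_1, H_2, H_3 be four 6-point subsets of S³ ⊂ ℝ⁴, each of which is a rotated regular hexagon lying in a 2-dimensional plane through the origin, and suppose H_0 ∪ H_1 ∪ H_2 ∪ H_3 is a spherical 5-design in S³. Then for any rotations of each hexagon within its own plane (i.e., replacing each H_m by a_m H_m where a_m is a rotation of the plane of H_m fixing the orthogonal complement), the union a_0H_0 ∪ a_1H_1 ∪ a_2H_2 ∪ a_3H_3 is again a spherical 5-design in S³. -/

import Mathlib

open Real MeasureTheory

noncomputable def sphereAvg (P : MvPolynomial (Fin 4) ℝ) : ℝ :=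
  ⨍ x : Metric.sphere (0 : EuclideanSpace ℝ (Fin 4)) 1,
    MvPolynomial.eval (fun i => (x : EuclideanSpace ℝ (Fin 4)) i) P
      ∂((volume : Measure (EuclideanSpace ℝ (Fin 4))).toSphere)

private lemma exp_zpow_ne_one {m : ℤ} (hm : m ≠ 0) (hm5 : m.natAbs ≤ 5) :
    Complex.exp (((π / 3 : ℝ) : ℂ) * Complex.I) ^ m ≠ 1 := by
  rw [← Complex.exp_int_mul]
  intro h
  rw [Complex.exp_eq_one_iff] at h
  obtain ⟨q, hq⟩ := h
  have hπ : (π : ℂ) ≠ 0 := by exact_mod_cast Real.pi_ne_zero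
  have h1 : (m : ℂ) = 6 * q := by
    push_cast at hq
    field_simp at hq
    have h2 : (m : ℂ) * ((π:ℂ) * Complex.I) = (6 * q) * ((π:ℂ) * Complex.I) := by
      linear_combination ((π:ℂ) * Complex.I) * hq
    exact mul_right_cancel₀ (mul_ne_zero hπ Complex.I_ne_zero) h2
  have : m = 6 * q := by exact_mod_cast h1
  omega

private lemma hex_complex (A B : Fin 4 → ℂ) (d : Fin 4 →₀ ℕ) (hd : ∑ i, d i ≤ 5) (t : ℝ) :
    ∑ j ∈ Finset.range 6, ∏ i,
        (A i * Complex.exp (((t + j * π / 3 : ℝ) : ℂ) * Complex.I)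
          + B i * (Complex.exp (((t + j * π / 3 : ℝ) : ℂ) * Complex.I))⁻¹) ^ d i
      = 6 * (∏ i, (Polynomial.C (A i) * Polynomial.X ^ 2 + Polynomial.C (B i)) ^ d i).coeff
          (∑ i, d i) := by
  set n := ∑ i, d i with hn
  set R : Polynomial ℂ := ∏ i, (Polynomial.C (A i) * Polynomial.X ^ 2 + Polynomial.C (B i)) ^ d i
    with hR
  have hRdeg : R.natDegree < 2 * n + 1 := by
    refine Nat.lt_succ_of_le ?_
    refine le_trans (Polynomial.natDegree_prod_le _ _) ?_
    rw [Finset.mul_sum]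
    refine Finset.sum_le_sum fun i _ => ?_
    refine le_trans Polynomial.natDegree_pow_le ?_
    rw [mul_comm 2 (d i)]
    refine Nat.mul_le_mul_left _ ?_
    refine le_trans (Polynomial.natDegree_add_le _ _) ?_
    simp only [Polynomial.natDegree_C, max_le_iff]
    exact ⟨le_trans (Polynomial.natDegree_C_mul_le _ _) (by simp), by simp⟩
  set w : ℂ := Complex.exp (((π/3 : ℝ):ℂ) * Complex.I) with hw
  set c : ℂ := Complex.exp ((t:ℂ) * Complex.I) with hc
  have hcne : c ≠ 0 := Complex.exp_ne_zero _
  have hwne : w ≠ 0 := Complex.exp_ne_zero _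
  have hzj : ∀ j ∈ Finset.range 6,
      Complex.exp (((t + j*π/3 : ℝ):ℂ) * Complex.I) = c * w ^ j := by
    intro j _
    rw [hc, hw, ← Complex.exp_nat_mul, ← Complex.exp_add]
    congr 1; push_cast; ring
  have step1 : ∀ z : ℂ, z ≠ 0 → ∏ i, (A i * z + B i * z⁻¹) ^ d i = R.eval z * (z⁻¹)^n := by
    intro z hz
    have hpt : ∀ i, A i * z + B i * z⁻¹ = (A i * z^2 + B i) * z⁻¹ := by
      intro i; field_simp
    simp_rw [hpt, mul_pow]
    rw [Finset.prod_mul_distrib, Finset.prod_pow_eq_pow_sum]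
    congr 1
    simp [hR, Polynomial.eval_prod]
  have hwm : ∀ m : ℤ, m ≠ 0 → m.natAbs ≤ 5 → ∑ j ∈ Finset.range 6, (w ^ m) ^ j = 0 := by
    intro m hm hm5
    have hne : w ^ m ≠ 1 := exp_zpow_ne_one hm hm5
    have h6 : w ^ (6:ℕ) = 1 := by
      rw [hw, ← Complex.exp_nat_mul,
        show ((6:ℕ):ℂ) * (((π/3:ℝ):ℂ) * Complex.I) = 2 * (π:ℝ) * Complex.I by push_cast; ring]
      exact Complex.exp_two_pi_mul_I
    have h1 : (w ^ m) ^ (6:ℕ) = 1 := by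
      rw [← zpow_natCast (w ^ m) 6, ← zpow_mul, mul_comm, zpow_mul, zpow_natCast, h6, one_zpow]
    rw [geom_sum_eq hne, h1]
    simp
  calc ∑ j ∈ Finset.range 6, ∏ i,
        (A i * Complex.exp (((t + j * π / 3 : ℝ) : ℂ) * Complex.I)
          + B i * (Complex.exp (((t + j * π / 3 : ℝ) : ℂ) * Complex.I))⁻¹) ^ d i
      = ∑ j ∈ Finset.range 6, R.eval (c * w^j) * ((c*w^j)⁻¹)^n := by
        refine Finset.sum_congr rfl fun j hj => ?_
        rw [hzj j hj]
        exact step1 _ (mul_ne_zero hcne (pow_ne_zero _ hwne))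
    _ = ∑ j ∈ Finset.range 6, ∑ k ∈ Finset.range (2*n+1),
          R.coeff k * (c*w^j)^((k:ℤ) - n) := by
        refine Finset.sum_congr rfl fun j hj => ?_
        rw [Polynomial.eval_eq_sum_range' hRdeg, Finset.sum_mul]
        refine Finset.sum_congr rfl fun k hk => ?_
        rw [mul_assoc]
        congr 1
        have hz : (c*w^j) ≠ 0 := mul_ne_zero hcne (pow_ne_zero _ hwne)
        rw [inv_pow, ← zpow_natCast (c*w^j) k, ← zpow_natCast (c*w^j) n, ← zpow_neg,
          ← zpow_add₀ hz, ← Int.sub_eq_add_neg]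
    _ = ∑ k ∈ Finset.range (2*n+1), R.coeff k * c^((k:ℤ)-n)
          * ∑ j ∈ Finset.range 6, (w^((k:ℤ)-n))^j := by
        rw [Finset.sum_comm]
        refine Finset.sum_congr rfl fun k hk => ?_
        rw [Finset.mul_sum]
        refine Finset.sum_congr rfl fun j hj => ?_
        rw [mul_zpow, mul_assoc]
        congr 2
        rw [← zpow_natCast w j, ← zpow_mul, mul_comm ((j:ℕ):ℤ), zpow_mul, zpow_natCast]
    _ = 6 * R.coeff n := by
        rw [Finset.sum_eq_single n]
        · simp
          ring
        · intro k hk hkn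
          have hm : ((k:ℤ) - n) ≠ 0 := by omega
          have hm5 : ((k:ℤ) - n).natAbs ≤ 5 := by
            have hk' := Finset.mem_range.mp hk
            omega
          rw [hwm _ hm hm5, mul_zero]
        · intro h; exact absurd (Finset.mem_range.mpr (by omega)) h

private lemma hex_real (a b : Fin 4 → ℝ) (d : Fin 4 →₀ ℕ) (hd : ∑ i, d i ≤ 5) (t s : ℝ) :
    ∑ j ∈ Finset.range 6, ∏ i,
        (Real.cos (t + j * π / 3) * a i + Real.sin (t + j * π / 3) * b i) ^ d i
    = ∑ j ∈ Finset.range 6, ∏ i,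
        (Real.cos (s + j * π / 3) * a i + Real.sin (s + j * π / 3) * b i) ^ d i := by
  have key : ∀ u : ℝ,
      ((∑ j ∈ Finset.range 6, ∏ i,
          (Real.cos (u + j * π / 3) * a i + Real.sin (u + j * π / 3) * b i) ^ d i : ℝ) : ℂ)
      = 6 * (∏ i, (Polynomial.C (((a i : ℂ) - Complex.I * b i) / 2) * Polynomial.X ^ 2
          + Polynomial.C (((a i : ℂ) + Complex.I * b i) / 2)) ^ d i).coeff (∑ i, d i) := by
    intro u
    rw [← hex_complex (fun i => ((a i : ℂ) - Complex.I * b i) / 2)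
      (fun i => ((a i : ℂ) + Complex.I * b i) / 2) d hd u]
    push_cast
    refine Finset.sum_congr rfl fun j _ => Finset.prod_congr rfl fun i _ => ?_
    congr 1
    have hexp : Complex.exp (-(((u : ℂ) + j * π / 3) * Complex.I))
        = (Complex.exp (((u : ℂ) + j * π / 3) * Complex.I))⁻¹ := Complex.exp_neg _
    rw [Complex.cos, Complex.sin, neg_mul, hexp]
    ring
  exact Complex.ofReal_injective ((key t).trans (key s).symm)

set_option maxHeartbeats 800000 in
theorem stmt16
    (e f : Fin 4 → EuclideanSpace ℝ (Fin 4))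
    (horth : ∀ m, inner ℝ (e m) (e m) = (1 : ℝ) ∧ inner ℝ (f m) (f m) = (1 : ℝ) ∧
      inner ℝ (e m) (f m) = (0 : ℝ))
    (α β : Fin 4 → ℝ)
    (hdesign : ∀ P : MvPolynomial (Fin 4) ℝ, P.totalDegree ≤ 5 →
      (1 / 24) * ∑ m : Fin 4, ∑ j ∈ Finset.range 6,
          MvPolynomial.eval
            (fun i => (Real.cos (α m + j * π / 3) • e m + Real.sin (α m + j * π / 3) • f m) i) P
        = sphereAvg P) :
    ∀ P : MvPolynomial (Fin 4) ℝ, P.totalDegree ≤ 5 →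
      (1 / 24) * ∑ m : Fin 4, ∑ j ∈ Finset.range 6,
          MvPolynomial.eval
            (fun i => (Real.cos (α m + β m + j * π / 3) • e m
              + Real.sin (α m + β m + j * π / 3) • f m) i) P
        = sphereAvg P := by
  intro P hP
  have hsum : ∀ (t : ℝ) (m : Fin 4), ∑ j ∈ Finset.range 6,
      MvPolynomial.eval (fun i => (Real.cos (t + j * π / 3) • e m
        + Real.sin (t + j * π / 3) • f m) i) P
      = ∑ d ∈ P.support, MvPolynomial.coeff d P * ∑ j ∈ Finset.range 6, ∏ i,
          (Real.cos (t + j * π / 3) * (e m) i + Real.sin (t + j * π / 3) * (f m) i) ^ d i := by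
    intro t m
    simp only [MvPolynomial.eval_eq', PiLp.add_apply, PiLp.smul_apply, smul_eq_mul]
    rw [Finset.sum_comm]
    exact Finset.sum_congr rfl fun d _ => (Finset.mul_sum _ _ _).symm
  have hmain : ∀ m : Fin 4, ∑ j ∈ Finset.range 6,
      MvPolynomial.eval (fun i => (Real.cos (α m + β m + j * π / 3) • e m
        + Real.sin (α m + β m + j * π / 3) • f m) i) P
      = ∑ j ∈ Finset.range 6,
      MvPolynomial.eval (fun i => (Real.cos (α m + j * π / 3) • e m
        + Real.sin (α m + j * π / 3) • f m) i) P := by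
    intro m
    rw [hsum (α m + β m) m, hsum (α m) m]
    refine Finset.sum_congr rfl fun d hd => ?_
    congr 1
    refine hex_real _ _ d ?_ _ _
    have h1 := MvPolynomial.le_totalDegree hd
    rw [Finsupp.sum_fintype _ _ (fun _ => rfl)] at h1
    omega
  calc (1 / 24 : ℝ) * ∑ m : Fin 4, ∑ j ∈ Finset.range 6,
          MvPolynomial.eval
            (fun i => (Real.cos (α m + β m + j * π / 3) • e m
              + Real.sin (α m + β m + j * π / 3) • f m) i) P
      = (1 / 24) * ∑ m : Fin 4, ∑ j ∈ Finset.range 6,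
          MvPolynomial.eval
            (fun i => (Real.cos (α m + j * π / 3) • e m
              + Real.sin (α m + j * π / 3) • f m) i) P := by
        rw [Finset.sum_congr rfl fun m _ => hmain m]
    _ = sphereAvg P := hdesign P hP
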